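/- Let H = (V, E) be a finite hypergraph, let λ = (λ_e)_{e ∈ E} be complex numbers, and for each vertex v let u^{(v)} = (u^{(v)}_0, …, u^{(v)}_{d_H(v)}) be complex numbers. Let κ, ρ > 0. Suppose that the base polynomial Ω(H, λ; x) is nonzero whenever |x_v| < κ for all v ∈ V, and that for each vertex v the key polynomial K^{(v)} is either identically zero or nonzero on {z : |z| < ρ}. Then the subgraph counting polynomial Z_W(H, λ, u; x) is either identically zero or nonzero whenever |x_v| < κρ for all v ∈ V. -/

import Mathlib

open Finset

/-- The degree of a vertex `v` in a collection `F` of edges of a hypergraph: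
the number of edges of `F` containing `v`. -/
def hypDeg {V : Type*} [DecidableEq V] (F : Finset (Finset V)) (v : V) : ℕ :=
  (F.filter (fun e => v ∈ e)).card

/-- Wagner's weighted subgraph counting polynomial
`Z_W(H, λ, u; x) = Σ_{F ⊆ E} λ^F u_{deg F} x^{deg F}`. -/
noncomputable def subgraphCountPoly {V : Type*} [Fintype V] [DecidableEq V]
    (E : Finset (Finset V)) (lam : Finset V → ℂ) (u : V → ℕ → ℂ) (x : V → ℂ) : ℂ :=
  ∑ F ∈ E.powerset, (∏ e ∈ F, lam e) * (∏ v : V, u v (hypDeg F v)) *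
    ∏ v : V, x v ^ hypDeg F v

/-- The base polynomial `Ω(H, λ; x) = Π_{e ∈ E} (1 + λ_e Π_{v ∈ e} x_v)`. -/
noncomputable def basePoly {V : Type*} [DecidableEq V]
    (E : Finset (Finset V)) (lam : Finset V → ℂ) (x : V → ℂ) : ℂ :=
  ∏ e ∈ E, (1 + lam e * ∏ v ∈ e, x v)

/-- The key polynomial of the vertex `v`:
`K^{(v)}(z) = Σ_{i=0}^{d_H(v)} C(d_H(v), i) u^{(v)}_i z^i`. -/
noncomputable def keyPoly {V : Type*} [DecidableEq V]
    (E : Finset (Finset V)) (u : V → ℕ → ℂ) (v : V) (z : ℂ) : ℂ :=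
  ∑ i ∈ Finset.range (hypDeg E v + 1), ((hypDeg E v).choose i : ℂ) * u v i * z ^ i

namespace Wag
open Polynomial

lemma esymm_zero' (s : Multiset ℂ) : s.esymm 0 = 1 := by
  simp [Multiset.esymm, Multiset.powersetCard_zero_left]

lemma esymm_cons (τ : ℂ) (T : Multiset ℂ) (i : ℕ) :
    (τ ::ₘ T).esymm (i + 1) = T.esymm (i + 1) + τ * T.esymm i := by
  rw [Multiset.esymm, Multiset.powersetCard_cons, Multiset.map_add, Multiset.sum_add,
    Multiset.map_map]
  congr 1
  rw [Multiset.esymm, ← Multiset.sum_map_mul_left]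
  congr 1
  apply Multiset.map_congr rfl
  intro x _
  simp

lemma esymm_eq_zero_of_lt {T : Multiset ℂ} {i : ℕ} (h : Multiset.card T < i) :
    T.esymm i = 0 := by
  have : T.powersetCard i = 0 := by
    rw [Multiset.eq_zero_iff_forall_notMem]
    intro t ht
    rw [Multiset.mem_powersetCard] at ht
    have := Multiset.card_le_card ht.1
    omega
  simp [Multiset.esymm, this]

lemma esymm_cons_zero (T : Multiset ℂ) (i : ℕ) :
    ((0 : ℂ) ::ₘ T).esymm i = T.esymm i := by
  cases i with
  | zero => rw [esymm_zero', esymm_zero']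
  | succ j => rw [esymm_cons]; ring

lemma esymm_pad (T : Multiset ℂ) (k : ℕ) (i : ℕ) :
    (T + Multiset.replicate k (0 : ℂ)).esymm i = T.esymm i := by
  induction k with
  | zero => simp
  | succ n ih =>
      rw [Multiset.replicate_succ, Multiset.add_cons, esymm_cons_zero, ih]

lemma esymm_smul (x : ℂ) (T : Multiset ℂ) (i : ℕ) :
    (T.map fun τ => x * τ).esymm i = x ^ i * T.esymm i := by
  have := Multiset.pow_smul_esymm x i T
  simp only [smul_eq_mul] at this
  rw [← this]



open Polynomial

noncomputable def polyOf (n : ℕ) (b : ℕ → ℂ) : Polynomial ℂ :=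
  ∑ i ∈ Finset.range (n + 1), Polynomial.C (b i) * Polynomial.X ^ i

lemma polyOf_eval (n : ℕ) (b : ℕ → ℂ) (z : ℂ) :
    (polyOf n b).eval z = ∑ i ∈ Finset.range (n + 1), b i * z ^ i := by
  simp [polyOf, eval_finset_sum]

lemma polyOf_coeff (n : ℕ) (b : ℕ → ℂ) (j : ℕ) :
    (polyOf n b).coeff j = if j < n + 1 then b j else 0 := by
  rw [polyOf, finset_sum_coeff]
  simp only [coeff_C_mul, coeff_X_pow, mul_ite, mul_one, mul_zero]
  rw [Finset.sum_ite_eq (Finset.range (n + 1)) j (fun i => b i)]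
  simp [Finset.mem_range]

lemma polyOf_natDegree_le (n : ℕ) (b : ℕ → ℂ) : (polyOf n b).natDegree ≤ n := by
  rw [natDegree_le_iff_coeff_eq_zero]
  intro m hm
  rw [polyOf_coeff]
  split <;> first | omega | rfl

lemma coeff_prod_one_add (T : Multiset ℂ) (i : ℕ) :
    ((T.map fun τ => Polynomial.C τ * Polynomial.X + 1).prod).coeff i = T.esymm i := by
  induction T using Multiset.induction generalizing i with
  | empty =>
      cases i with
      | zero => simp [esymm_zero']
      | succ j =>
          rw [esymm_eq_zero_of_lt (by simp)]
          simp [coeff_one]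
  | cons τ T ih =>
      rw [Multiset.map_cons, Multiset.prod_cons]
      have expand : (Polynomial.C τ * Polynomial.X + 1) * (T.map fun τ => Polynomial.C τ * Polynomial.X + 1).prod
          = Polynomial.C τ * (Polynomial.X * (T.map fun τ => Polynomial.C τ * Polynomial.X + 1).prod)
            + (T.map fun τ => Polynomial.C τ * Polynomial.X + 1).prod := by ring
      rw [expand]
      cases i with
      | zero =>
          rw [coeff_add, coeff_C_mul, Polynomial.mul_coeff_zero, coeff_X_zero]
          rw [ih, esymm_zero', esymm_zero']
          ring
      | succ j =>
          rw [coeff_add, coeff_C_mul, coeff_X_mul, ih, ih, esymm_cons]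
          ring

lemma multiset_cs (m : Multiset ℝ) (hm : ∀ x ∈ m, 0 ≤ x) :
    m.sum ^ 2 ≤ (Multiset.card m : ℝ) * (m.map fun x => x ^ 2).sum := by
  induction m using Multiset.induction with
  | empty => simp
  | cons a m ih =>
      have ha : 0 ≤ a := hm a (Multiset.mem_cons_self a m)
      have hm' : ∀ x ∈ m, 0 ≤ x := fun x hx => hm x (Multiset.mem_cons_of_mem hx)
      have hS : 0 ≤ m.sum := Multiset.sum_nonneg hm'
      have hQ : 0 ≤ (m.map fun x => x ^ 2).sum := by
        apply Multiset.sum_nonneg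
        intro x hx
        obtain ⟨y, _, rfl⟩ := Multiset.mem_map.mp hx
        positivity
      have ihs := ih hm'
      rw [Multiset.sum_cons, Multiset.card_cons, Multiset.map_cons, Multiset.sum_cons]
      push_cast
      set S : ℝ := m.sum with hSdef
      set Q : ℝ := (m.map fun x => x ^ 2).sum with hQdef
      set n : ℝ := (Multiset.card m : ℝ) with hndef
      have hn : 0 ≤ n := Nat.cast_nonneg _
      rcases eq_or_lt_of_le hn with hn0 | hnpos
      · have hcard : Multiset.card m = 0 := by
          have h2 : n = 0 := hn0.symm
          rw [hndef] at h2
          exact_mod_cast h2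
        have : m = 0 := Multiset.card_eq_zero.mp hcard
        subst this
        simp only [Multiset.sum_zero, Multiset.map_zero] at hSdef hQdef ⊢
        rw [← hn0]
        nlinarith [hQ]
      · have hid : n * ((n + 1) * (a ^ 2 + Q) - (a + S) ^ 2)
            = (n * a - S) ^ 2 + (n + 1) * (n * Q - S ^ 2) := by ring
        nlinarith [sq_nonneg (n * a - S), mul_pos hnpos hnpos]

lemma eval_derivative_prod (R : Multiset ℂ) (w : ℂ) (h : ∀ ρ ∈ R, w - ρ ≠ 0) :
    (Polynomial.derivative ((R.map fun ρ => Polynomial.X - Polynomial.C ρ).prod)).eval w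
      = ((R.map fun ρ => Polynomial.X - Polynomial.C ρ).prod).eval w
        * (R.map fun ρ => (w - ρ)⁻¹).sum := by
  induction R using Multiset.induction with
  | empty => simp
  | cons ρ R ih =>
      have hρ : w - ρ ≠ 0 := h ρ (Multiset.mem_cons_self _ _)
      have h' : ∀ ρ' ∈ R, w - ρ' ≠ 0 := fun ρ' hρ' => h ρ' (Multiset.mem_cons_of_mem hρ')
      rw [Multiset.map_cons, Multiset.prod_cons, Multiset.map_cons, Multiset.sum_cons,
        derivative_mul]
      simp only [derivative_sub, derivative_X, derivative_C, sub_zero, eval_add, eval_mul,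
        eval_sub, eval_X, eval_C, eval_one, one_mul]
      rw [ih h']
      field_simp

lemma eval_prod_ne_zero (R : Multiset ℂ) (w : ℂ) (h : ∀ ρ ∈ R, w - ρ ≠ 0) :
    ((R.map fun ρ => Polynomial.X - Polynomial.C ρ).prod).eval w ≠ 0 := by
  rw [Polynomial.eval_multiset_prod]
  apply Multiset.prod_ne_zero
  intro hx
  rw [Multiset.mem_map] at hx
  obtain ⟨q, hq, hq0⟩ := hx
  rw [Multiset.mem_map] at hq
  obtain ⟨ρ, hρ, rfl⟩ := hq
  simp only [eval_sub, eval_X, eval_C] at hq0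
  exact h ρ hρ hq0



lemma nat_aux1 (d i : ℕ) (hi : i ≤ d + 1) :
    (d + 1 - i) * (d + 1).choose i = (d + 1) * d.choose i := by
  rcases Nat.lt_or_ge i (d + 1) with h | h
  · have hi' : i ≤ d := by omega
    have h1 := Nat.add_one_mul_choose_eq d (d - i)
    rw [Nat.choose_symm hi'] at h1
    have h2 : d - i + 1 = d + 1 - i := by omega
    rw [h2] at h1
    have h3 : (d + 1).choose (d + 1 - i) = (d + 1).choose i := by
      have := Nat.choose_symm (show i ≤ d + 1 by omega)
      simpa using this
    rw [h3] at h1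
    simpa [mul_comm] using h1.symm
  · have hi2 : i = d + 1 := by omega
    subst hi2
    simp [Nat.choose_succ_self]

lemma nat_aux2 (d j : ℕ) :
    (j + 1) * (d + 1).choose (j + 1) = (d + 1) * d.choose j := by
  have h := Nat.add_one_mul_choose_eq d j
  simpa [Nat.succ_eq_add_one, mul_comm] using h.symm

lemma cast_aux1 (d : ℕ) (i : ℕ) (hi : i ∈ Finset.range (d + 2)) :
    ((d + 1 : ℕ) : ℂ) - (i : ℂ) = ((d + 1 - i : ℕ) : ℂ) := by
  rw [Finset.mem_range] at hi
  rw [Nat.cast_sub (by omega)]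

set_option maxHeartbeats 1000000 in
lemma laguerre {r : ℝ} (hr : 0 < r) (d : ℕ) (a : ℕ → ℂ)
    (hA : ∀ z : ℂ, ‖z‖ < r →
      ∑ i ∈ Finset.range (d + 2), ((d + 1).choose i : ℂ) * a i * z ^ i ≠ 0)
    (t : ℂ) (ht : ‖t‖ < r) (w : ℂ) (hw : ‖w‖ < r) :
    ∑ i ∈ Finset.range (d + 1), (d.choose i : ℂ) * (a i + t * a (i + 1)) * w ^ i ≠ 0 := by
  intro hB
  set p := polyOf (d + 1) (fun i => ((d + 1).choose i : ℂ) * a i) with hpdef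
  have hpe : ∀ z : ℂ, p.eval z
      = ∑ i ∈ Finset.range (d + 2), ((d + 1).choose i : ℂ) * a i * z ^ i := by
    intro z
    rw [hpdef, polyOf_eval]
  have hp0 : ∀ z : ℂ, ‖z‖ < r → p.eval z ≠ 0 := by
    intro z hz
    rw [hpe z]; exact hA z hz
  have hpne : p ≠ 0 := by
    intro h
    apply hp0 0 (by simpa using hr)
    rw [h, Polynomial.eval_zero]
  -- derivative evaluation, coefficient form
  have hde : ∀ z : ℂ, (Polynomial.derivative p).eval z
      = ∑ j ∈ Finset.range (d + 1),
          ((j + 1 : ℕ) : ℂ) * ((d + 1).choose (j + 1) : ℂ) * a (j + 1) * z ^ j := by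
    intro z
    rw [hpdef, polyOf, derivative_sum]
    rw [Polynomial.eval_finset_sum]
    have : ∀ i ∈ Finset.range (d + 2),
        (Polynomial.derivative (Polynomial.C (((d + 1).choose i : ℂ) * a i) * Polynomial.X ^ i)).eval z
        = ((d + 1).choose i : ℂ) * a i * ((i : ℕ) : ℂ) * z ^ (i - 1) := by
      intro i _
      rw [derivative_C_mul, derivative_X_pow]
      simp [mul_assoc]
    rw [Finset.sum_congr rfl this, Finset.sum_range_succ']
    simp only [Nat.cast_zero, mul_zero, zero_mul, add_zero, Nat.add_sub_cancel]
    apply Finset.sum_congr rfl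
    intro j _
    push_cast
    ring
  -- key identity
  have hkey : ∀ z : ℂ, ((d : ℂ) + 1) *
        (∑ i ∈ Finset.range (d + 1), (d.choose i : ℂ) * (a i + t * a (i + 1)) * z ^ i)
      = ((d : ℂ) + 1) * p.eval z + (t - z) * (Polynomial.derivative p).eval z := by
    intro z
    rw [hpe z, hde z]
    have e1 : ∀ j : ℕ, ((j + 1 : ℕ) : ℂ) * ((d + 1).choose (j + 1) : ℂ)
        = ((d : ℂ) + 1) * (d.choose j : ℂ) := by
      intro j
      have := nat_aux2 d j
      have h2 : (((j + 1) * (d + 1).choose (j + 1) : ℕ) : ℂ) = (((d + 1) * d.choose j : ℕ) : ℂ) := by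
        exact_mod_cast congrArg (Nat.cast : ℕ → ℂ) this
      push_cast at h2
      push_cast
      linear_combination h2
    have e2 : ∀ i ∈ Finset.range (d + 2), (((d : ℂ) + 1) - (i : ℂ)) * ((d + 1).choose i : ℂ)
        = ((d : ℂ) + 1) * (d.choose i : ℂ) := by
      intro i hi
      rw [Finset.mem_range] at hi
      have := nat_aux1 d i (by omega)
      have h2 : (((d + 1 - i) * (d + 1).choose i : ℕ) : ℂ) = (((d + 1) * d.choose i : ℕ) : ℂ) := by
        exact_mod_cast congrArg (Nat.cast : ℕ → ℂ) this
      push_cast [Nat.cast_sub (show i ≤ d + 1 by omega)] at h2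
      push_cast
      linear_combination h2
    -- z * derivative sum, reindexed over range (d+2)
    have e3 : z * (∑ j ∈ Finset.range (d + 1),
          ((j + 1 : ℕ) : ℂ) * ((d + 1).choose (j + 1) : ℂ) * a (j + 1) * z ^ j)
        = ∑ i ∈ Finset.range (d + 2), (i : ℂ) * ((d + 1).choose i : ℂ) * a i * z ^ i := by
      conv_rhs => rw [Finset.sum_range_succ']
      simp only [Nat.cast_zero, zero_mul, mul_zero, add_zero, pow_zero, mul_one]
      rw [Finset.mul_sum]
      apply Finset.sum_congr rfl
      intro j _
      push_cast
      ring
    have e4 : ∑ i ∈ Finset.range (d + 2), ((d : ℂ) + 1) * (d.choose i : ℂ) * a i * z ^ i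
        = ∑ i ∈ Finset.range (d + 1), ((d : ℂ) + 1) * (d.choose i : ℂ) * a i * z ^ i := by
      rw [Finset.sum_range_succ]
      simp [Nat.choose_succ_self]
    calc ((d : ℂ) + 1) *
        (∑ i ∈ Finset.range (d + 1), (d.choose i : ℂ) * (a i + t * a (i + 1)) * z ^ i)
        = (∑ i ∈ Finset.range (d + 1), ((d : ℂ) + 1) * (d.choose i : ℂ) * a i * z ^ i)
          + t * (∑ j ∈ Finset.range (d + 1),
              ((j + 1 : ℕ) : ℂ) * ((d + 1).choose (j + 1) : ℂ) * a (j + 1) * z ^ j) := by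
          rw [Finset.mul_sum, Finset.mul_sum, ← Finset.sum_add_distrib]
          apply Finset.sum_congr rfl
          intro i _
          rw [e1 i]
          ring
      _ = (∑ i ∈ Finset.range (d + 2), ((d : ℂ) + 1) * ((d + 1).choose i : ℂ) * a i * z ^ i)
          - (∑ i ∈ Finset.range (d + 2), (i : ℂ) * ((d + 1).choose i : ℂ) * a i * z ^ i)
          + t * (∑ j ∈ Finset.range (d + 1),
              ((j + 1 : ℕ) : ℂ) * ((d + 1).choose (j + 1) : ℂ) * a (j + 1) * z ^ j) := by
          rw [← Finset.sum_sub_distrib]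
          have : ∀ i ∈ Finset.range (d + 2),
              ((d : ℂ) + 1) * ((d + 1).choose i : ℂ) * a i * z ^ i
                - (i : ℂ) * ((d + 1).choose i : ℂ) * a i * z ^ i
              = ((d : ℂ) + 1) * (d.choose i : ℂ) * a i * z ^ i := by
            intro i hi
            have := e2 i hi
            linear_combination a i * z ^ i * this
          rw [Finset.sum_congr rfl this, e4]
      _ = ((d : ℂ) + 1) * (∑ i ∈ Finset.range (d + 2), ((d + 1).choose i : ℂ) * a i * z ^ i)
          + (t - z) * (∑ j ∈ Finset.range (d + 1),
              ((j + 1 : ℕ) : ℂ) * ((d + 1).choose (j + 1) : ℂ) * a (j + 1) * z ^ j) := by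
          have h5 : ∑ i ∈ Finset.range (d + 2), ((d : ℂ) + 1) * ((d + 1).choose i : ℂ) * a i * z ^ i
              = ((d : ℂ) + 1) * ∑ i ∈ Finset.range (d + 2), ((d + 1).choose i : ℂ) * a i * z ^ i := by
            rw [Finset.mul_sum]
            exact Finset.sum_congr rfl fun i _ => by ring
          rw [h5, ← e3]
          ring
  -- factor p over its roots
  have hsplit := (IsAlgClosed.splits p).eq_prod_roots
  set R := p.roots with hRdef
  have hroots : ∀ ρ ∈ R, r ≤ ‖ρ‖ := by
    intro ρ hρ
    by_contra hc
    push_neg at hc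
    exact hp0 ρ hc ((Polynomial.mem_roots'.mp hρ)).2
  have hwρ : ∀ ρ ∈ R, w - ρ ≠ 0 := by
    intro ρ hρ h0
    rw [sub_eq_zero] at h0
    have := hroots ρ hρ
    rw [← h0] at this
    linarith
  set L := p.leadingCoeff with hL
  set Pw := ((R.map fun ρ => Polynomial.X - Polynomial.C ρ).prod).eval w with hPwdef
  set σ := (R.map fun ρ => (w - ρ)⁻¹).sum with hσdef
  have hPw : p.eval w = L * Pw := by
    conv_lhs => rw [hsplit]
    rw [eval_mul, eval_C]
  have hdPw : (Polynomial.derivative p).eval w = L * (Pw * σ) := by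
    conv_lhs => rw [hsplit]
    rw [derivative_C_mul, eval_mul, eval_C, eval_derivative_prod R w hwρ]
  have hpewne : p.eval w ≠ 0 := hp0 w hw
  have hLP : L * Pw ≠ 0 := hPw ▸ hpewne
  have hmain : ((d : ℂ) + 1) = (w - t) * σ := by
    have h0 := hkey w
    rw [hB, mul_zero, hPw, hdPw] at h0
    have h1 : (((d : ℂ) + 1) - (w - t) * σ) * (L * Pw) = 0 := by linear_combination -h0
    rcases mul_eq_zero.mp h1 with h | h
    · exact sub_eq_zero.mp h
    · exact absurd h hLP
  -- numeric contradiction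
  set W := ‖w‖ with hW
  have hrW : W < r := hw
  have hWnn : 0 ≤ W := norm_nonneg w
  have hposr : (0:ℝ) < r ^ 2 - W ^ 2 := by nlinarith
  have hbound : ∀ ρ ∈ R, (r ^ 2 - W ^ 2) * (‖(w - ρ)⁻¹‖) ^ 2
      + 2 * (w * (w - ρ)⁻¹).re ≤ 1 := by
    intro ρ hρ
    have h1 : r ≤ ‖ρ‖ := hroots ρ hρ
    have h2 : w - ρ ≠ 0 := hwρ ρ hρ
    have hη0 : (w - ρ)⁻¹ ≠ 0 := inv_ne_zero h2
    set η := (w - ρ)⁻¹ with hη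
    have hρw : ρ * η = w * η - 1 := by
      rw [hη]
      field_simp
      ring
    have h3 : r * ‖η‖ ≤ ‖w * η - 1‖ := by
      calc r * ‖η‖ ≤ ‖ρ‖ * ‖η‖ :=
            mul_le_mul_of_nonneg_right h1 (norm_nonneg η)
        _ = ‖ρ * η‖ := (norm_mul ρ η).symm
        _ = ‖w * η - 1‖ := by rw [hρw]
    have h4 : (r * ‖η‖) ^ 2 ≤ (‖w * η - 1‖) ^ 2 :=
      pow_le_pow_left₀ (by positivity) h3 2
    have h5 : (‖w * η - 1‖) ^ 2
        = W ^ 2 * (‖η‖) ^ 2 + 1 - 2 * (w * η).re := by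
      rw [Complex.sq_norm, Complex.normSq_sub, Complex.normSq_mul]
      simp [← Complex.sq_norm, hW]
    rw [h5, mul_pow] at h4
    linarith
  set k := Multiset.card R with hk
  have hkn : (k : ℝ) ≤ (d : ℝ) + 1 := by
    have hh : k ≤ d + 1 := le_trans (Polynomial.card_roots' p) (polyOf_natDegree_le _ _)
    exact_mod_cast hh
  set P := (R.map fun ρ => (‖(w - ρ)⁻¹‖) ^ 2).sum with hPdef
  have hPnn : 0 ≤ P := by
    apply Multiset.sum_nonneg
    intro x hx
    obtain ⟨ρ, _, rfl⟩ := Multiset.mem_map.mp hx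
    positivity
  have hsum1 : (R.map fun ρ => (r ^ 2 - W ^ 2) * (‖(w - ρ)⁻¹‖) ^ 2
      + 2 * (w * (w - ρ)⁻¹).re).sum ≤ (k : ℝ) := by
    have hb2 : ∀ x ∈ R.map (fun ρ => (r ^ 2 - W ^ 2) * (‖(w - ρ)⁻¹‖) ^ 2
        + 2 * (w * (w - ρ)⁻¹).re), x ≤ (1:ℝ) := by
      intro x hx
      obtain ⟨ρ, hρ, rfl⟩ := Multiset.mem_map.mp hx
      exact hbound ρ hρ
    have hh := Multiset.sum_le_card_nsmul _ 1 hb2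
    simpa using hh
  have hre : (w * σ).re = (R.map fun ρ => (w * (w - ρ)⁻¹).re).sum := by
    rw [hσdef, ← Multiset.sum_map_mul_left]
    have hh := map_multiset_sum Complex.reAddGroupHom (R.map fun ρ => w * (w - ρ)⁻¹)
    simpa [Multiset.map_map] using hh
  have hsplit1 : (R.map fun ρ => (r ^ 2 - W ^ 2) * (‖(w - ρ)⁻¹‖) ^ 2
      + 2 * (w * (w - ρ)⁻¹).re).sum
      = (r ^ 2 - W ^ 2) * P + 2 * (w * σ).re := by
    rw [Multiset.sum_map_add, hre, hPdef, ← Multiset.sum_map_mul_left, ← Multiset.sum_map_mul_left]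
  rw [hsplit1] at hsum1
  have habs : ‖σ‖ ≤ (R.map fun ρ => ‖(w - ρ)⁻¹‖).sum := by
    rw [hσdef]
    have hh := norm_multiset_sum_le (R.map fun ρ => (w - ρ)⁻¹)
    simpa [Multiset.map_map] using hh
  have hnn2 : ∀ x ∈ R.map (fun ρ => ‖(w - ρ)⁻¹‖), (0:ℝ) ≤ x := by
    intro x hx
    obtain ⟨ρ, _, rfl⟩ := Multiset.mem_map.mp hx
    positivity
  have hcs := multiset_cs _ hnn2
  have hσ2 : (‖σ‖) ^ 2 ≤ ((d : ℝ) + 1) * P := by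
    have h1 : (‖σ‖) ^ 2 ≤ ((R.map fun ρ => ‖(w - ρ)⁻¹‖).sum) ^ 2 :=
      pow_le_pow_left₀ (norm_nonneg σ) habs 2
    have h2 : ((R.map fun ρ => ‖(w - ρ)⁻¹‖).sum) ^ 2 ≤ (k : ℝ) * P := by
      simpa [Multiset.card_map, Multiset.map_map, hPdef] using hcs
    have h3 : (k : ℝ) * P ≤ ((d : ℝ) + 1) * P := mul_le_mul_of_nonneg_right hkn hPnn
    linarith
  set n : ℝ := (d : ℝ) + 1 with hn
  have hn1 : (1 : ℝ) ≤ n := by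
    have : (0:ℝ) ≤ (d : ℝ) := Nat.cast_nonneg d
    rw [hn]; linarith
  have hdc : ((d : ℂ) + 1) ≠ 0 := by
    have : ((d + 1 : ℕ) : ℂ) ≠ 0 := Nat.cast_ne_zero.mpr (Nat.succ_ne_zero d)
    push_cast at this
    exact this
  have hwt : w - t ≠ 0 := by
    intro h0
    rw [h0, zero_mul] at hmain
    exact hdc hmain
  set D := Complex.normSq (w - t) with hD
  have hDpos : 0 < D := Complex.normSq_pos.mpr hwt
  have f3 : (‖σ‖) ^ 2 * D = n ^ 2 := by
    have h2 : (‖w - t‖) ^ 2 * (‖σ‖) ^ 2 = n ^ 2 := by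
      rw [← mul_pow, ← norm_mul, ← hmain]
      have : ‖(d : ℂ) + 1‖ = n := by
        rw [hn]
        have : ((d : ℂ) + 1) = ((((d : ℝ) + 1) : ℝ) : ℂ) := by push_cast; ring
        rw [this, Complex.norm_real, Real.norm_eq_abs]
        rw [abs_of_nonneg (by positivity)]
      rw [this]
    rw [hD, ← Complex.sq_norm]
    linarith
  set c := (w * (starRingEnd ℂ) t).re with hc
  have hnsqw : Complex.normSq w = W ^ 2 := by rw [hW, Complex.sq_norm]
  have f4 : (w * σ).re * D = n * (W ^ 2 - c) := by
    have hcast : ((d : ℂ) + 1) = ((n : ℝ) : ℂ) := by rw [hn]; push_cast; ring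
    have h2 : w * ((starRingEnd ℂ) (w - t)) = (Complex.normSq w : ℂ) - w * (starRingEnd ℂ) t := by
      rw [map_sub, mul_sub, Complex.mul_conj]
    have h1 : ((D : ℝ) : ℂ) * (w * σ)
        = ((n : ℝ) : ℂ) * ((Complex.normSq w : ℂ) - w * (starRingEnd ℂ) t) := by
      rw [hD]
      calc ((Complex.normSq (w - t) : ℝ) : ℂ) * (w * σ)
          = (w * σ) * ((w - t) * (starRingEnd ℂ) (w - t)) := by rw [Complex.mul_conj]; ring
        _ = ((d : ℂ) + 1) * (w * (starRingEnd ℂ) (w - t)) := by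
            linear_combination (-(w * (starRingEnd ℂ) (w - t))) * hmain
        _ = ((n : ℝ) : ℂ) * ((Complex.normSq w : ℂ) - w * (starRingEnd ℂ) t) := by
            rw [h2, hcast]
    have h3 := congrArg Complex.re h1
    rw [Complex.re_ofReal_mul, Complex.re_ofReal_mul, Complex.sub_re, Complex.ofReal_re] at h3
    rw [hnsqw] at h3
    rw [hc, mul_comm]
    rw [h3]
  have f5 : D = W ^ 2 - 2 * c + (‖t‖) ^ 2 := by
    rw [hD, Complex.normSq_sub, hnsqw, ← Complex.sq_norm t, hc]
    ring
  have f6 : (‖t‖) ^ 2 < r ^ 2 :=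
    pow_lt_pow_left₀ ht (norm_nonneg t) (by norm_num)
  clear_value W k P n D c σ
  clear hsplit1 hre hbound hroots hwρ hkey hpe hde hp0 hA hB hcs habs hsplit hPw hdPw hpewne hLP
  have g1 : (r ^ 2 - W ^ 2) * P ≤ n - 2 * (w * σ).re := by
    linarith
  have g5 : (r ^ 2 - W ^ 2) * (‖σ‖) ^ 2 ≤ n * (n - 2 * (w * σ).re) := by
    have g2 : (r ^ 2 - W ^ 2) * ((‖σ‖) ^ 2) ≤ (r ^ 2 - W ^ 2) * (n * P) := by
      exact mul_le_mul_of_nonneg_left hσ2 (le_of_lt hposr)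
    have g3 : n * ((r ^ 2 - W ^ 2) * P) ≤ n * (n - 2 * (w * σ).re) :=
      mul_le_mul_of_nonneg_left g1 (by linarith)
    have g4 : (r ^ 2 - W ^ 2) * (n * P) = n * ((r ^ 2 - W ^ 2) * P) := by ring
    linarith [g2, g3, g4]
  have g6 : (r ^ 2 - W ^ 2) * n ^ 2 ≤ (n * n) * D - 2 * n * ((w * σ).re * D) := by
    have hh := mul_le_mul_of_nonneg_right g5 (le_of_lt hDpos)
    calc (r ^ 2 - W ^ 2) * n ^ 2 = (r ^ 2 - W ^ 2) * (‖σ‖) ^ 2 * D := by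
          rw [mul_assoc, f3]
      _ ≤ n * (n - 2 * (w * σ).re) * D := hh
      _ = (n * n) * D - 2 * n * ((w * σ).re * D) := by ring
  rw [f4, f5] at g6
  have hn2 : (1 : ℝ) ≤ n ^ 2 := by nlinarith
  nlinarith [g6, f6, hn2]

lemma gws {r : ℝ} (hr : 0 < r) : ∀ (d : ℕ) (a : ℕ → ℂ),
    (∀ z : ℂ, ‖z‖ < r →
      ∑ i ∈ Finset.range (d + 1), (d.choose i : ℂ) * a i * z ^ i ≠ 0) →
    ∀ Y : Multiset ℂ, Multiset.card Y = d → (∀ y ∈ Y, ‖y‖ < r) →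
      ∑ i ∈ Finset.range (d + 1), a i * Y.esymm i ≠ 0 := by
  intro d
  induction d with
  | zero =>
      intro a hA Y hY _
      rw [Multiset.card_eq_zero] at hY
      subst hY
      have hh := hA 0 (by simpa using hr)
      simpa [esymm_zero'] using hh
  | succ d ih =>
      intro a hA Y hY hYlt
      obtain ⟨t, Y', rfl⟩ : ∃ t Y', Y = t ::ₘ Y' := by
        rcases Multiset.exists_mem_of_ne_zero
          (show Y ≠ 0 by intro h0; rw [h0] at hY; simp at hY) with ⟨t, ht⟩
        exact ⟨t, Y.erase t, (Multiset.cons_erase ht).symm⟩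
      have ht : ‖t‖ < r := hYlt t (Multiset.mem_cons_self _ _)
      have hY' : Multiset.card Y' = d := by
        rw [Multiset.card_cons] at hY; omega
      have hY'lt : ∀ y ∈ Y', ‖y‖ < r :=
        fun y hy => hYlt y (Multiset.mem_cons_of_mem hy)
      have hB : ∀ z : ℂ, ‖z‖ < r →
          ∑ i ∈ Finset.range (d + 1), (d.choose i : ℂ) * (a i + t * a (i + 1)) * z ^ i ≠ 0 :=
        fun z hz => laguerre hr d a hA t ht z hz
      have hres := ih (fun i => a i + t * a (i + 1)) hB Y' hY' hY'lt
      have hid : ∑ i ∈ Finset.range (d + 1 + 1), a i * (t ::ₘ Y').esymm i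
          = ∑ i ∈ Finset.range (d + 1), (a i + t * a (i + 1)) * Y'.esymm i := by
        have hS1 : ∑ j ∈ Finset.range (d + 1), a (j + 1) * Y'.esymm (j + 1)
              + a 0 * Y'.esymm 0
            = ∑ j ∈ Finset.range (d + 1), a j * Y'.esymm j := by
          have h1 := Finset.sum_range_succ' (fun i => a i * Y'.esymm i) (d + 1)
          have h2 := Finset.sum_range_succ (fun i => a i * Y'.esymm i) (d + 1)
          rw [esymm_eq_zero_of_lt (by omega), mul_zero, add_zero] at h2
          rw [← h1, h2]
        rw [Finset.sum_range_succ' (fun i => a i * (t ::ₘ Y').esymm i) (d + 1)]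
        have h3 : ∀ j ∈ Finset.range (d + 1),
            a (j + 1) * (t ::ₘ Y').esymm (j + 1)
            = a (j + 1) * Y'.esymm (j + 1) + t * (a (j + 1) * Y'.esymm j) := by
          intro j _
          rw [esymm_cons]
          ring
        rw [Finset.sum_congr rfl h3, Finset.sum_add_distrib, ← Finset.mul_sum]
        have h4 : ∀ j ∈ Finset.range (d + 1),
            (a j + t * a (j + 1)) * Y'.esymm j
            = a j * Y'.esymm j + t * (a (j + 1) * Y'.esymm j) := by
          intro j _
          ring
        rw [Finset.sum_congr rfl h4, Finset.sum_add_distrib, ← Finset.mul_sum]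
        simp only [esymm_zero'] at hS1 ⊢
        linear_combination hS1
      rw [hid]
      exact hres

lemma key_data {rho : ℝ} (hrho : 0 < rho) (d : ℕ) (c : ℕ → ℂ)
    (h : ∀ z : ℂ, ‖z‖ < rho →
      ∑ i ∈ Finset.range (d + 1), (d.choose i : ℂ) * c i * z ^ i ≠ 0) :
    c 0 ≠ 0 ∧ ∃ T : Multiset ℂ, Multiset.card T ≤ d ∧ (∀ τ ∈ T, ‖τ‖ ≤ rho⁻¹) ∧
      ∀ i, i ≤ d → (d.choose i : ℂ) * c i = c 0 * T.esymm i := by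
  set p := polyOf d (fun i => (d.choose i : ℂ) * c i) with hpdef
  have hpe : ∀ z, p.eval z = ∑ i ∈ Finset.range (d + 1), (d.choose i : ℂ) * c i * z ^ i :=
    fun z => polyOf_eval _ _ z
  have hp0 : ∀ z : ℂ, ‖z‖ < rho → p.eval z ≠ 0 := by
    intro z hz
    rw [hpe z]; exact h z hz
  have hcoe : ∀ i, i ≤ d → p.coeff i = (d.choose i : ℂ) * c i := by
    intro i hi
    rw [hpdef, polyOf_coeff]
    rw [if_pos (by omega)]
  have heval0 : p.eval 0 = c 0 := by
    rw [← Polynomial.coeff_zero_eq_eval_zero, hcoe 0 (Nat.zero_le d)]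
    simp
  have hc0ne : c 0 ≠ 0 := by
    have hh := hp0 0 (by simpa using hrho)
    rwa [heval0] at hh
  have hpne : p ≠ 0 := fun h0 => hc0ne (by rw [← heval0, h0, Polynomial.eval_zero])
  have hsplit := (IsAlgClosed.splits p).eq_prod_roots
  set R := p.roots with hR
  have hroots : ∀ ρ ∈ R, rho ≤ ‖ρ‖ := by
    intro ρ hρ
    by_contra hcon
    push_neg at hcon
    exact hp0 ρ hcon ((Polynomial.mem_roots'.mp hρ)).2
  have hρne : ∀ ρ ∈ R, ρ ≠ 0 := by
    intro ρ hρ h0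
    have := hroots ρ hρ
    rw [h0] at this
    simp at this
    linarith
  set T := R.map (fun ρ => -ρ⁻¹) with hT
  set Q := (T.map fun τ => Polynomial.C τ * Polynomial.X + 1).prod with hQ
  have hfac0 : (R.map fun ρ => Polynomial.X - Polynomial.C ρ).prod
      = Polynomial.C ((R.map fun ρ => -ρ).prod) * Q := by
    have h1 : R.map (fun ρ => Polynomial.X - Polynomial.C ρ)
        = R.map (fun ρ => Polynomial.C (-ρ) * (Polynomial.C (-ρ⁻¹) * Polynomial.X + 1)) := by
      apply Multiset.map_congr rfl
      intro ρ hρ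
      have hne := hρne ρ hρ
      have hexp : (Polynomial.C (-ρ)) * (Polynomial.C (-ρ⁻¹) * Polynomial.X + 1)
          = Polynomial.C ((-ρ) * (-ρ⁻¹)) * Polynomial.X + Polynomial.C (-ρ) := by
        rw [Polynomial.C_mul]; ring
      rw [hexp, show (-ρ) * -ρ⁻¹ = (1:ℂ) by field_simp]
      simp [sub_eq_add_neg]
    rw [h1, Multiset.prod_map_mul]
    congr 1
    · rw [← Function.comp_def (fun x : ℂ => Polynomial.C x) (fun ρ : ℂ => -ρ),
        ← Multiset.map_map, Multiset.prod_hom]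
    · rw [hQ, hT, Multiset.map_map]
      rfl
  have hfac : p = Polynomial.C (c 0) * Q := by
    have h2 : p = Polynomial.C (p.leadingCoeff * (R.map fun ρ => -ρ).prod) * Q := by
      rw [Polynomial.C_mul, mul_assoc, ← hfac0]
      exact hsplit
    have h3 : p.leadingCoeff * (R.map fun ρ => -ρ).prod = c 0 := by
      have h4 := congrArg (Polynomial.eval 0) h2
      rw [heval0, Polynomial.eval_mul, Polynomial.eval_C] at h4
      have h5 : Q.eval 0 = 1 := by
        rw [← Polynomial.coeff_zero_eq_eval_zero, hQ, coeff_prod_one_add, esymm_zero']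
      rw [h5, mul_one] at h4
      exact h4.symm
    rw [h2, h3]
  refine ⟨hc0ne, T, ?_, ?_, ?_⟩
  · rw [hT, Multiset.card_map]
    exact (Polynomial.card_roots' p).trans (polyOf_natDegree_le _ _)
  · intro τ hτ
    rw [hT] at hτ
    obtain ⟨ρ, hρ, rfl⟩ := Multiset.mem_map.mp hτ
    have h1 := hroots ρ hρ
    have h2 : ‖-ρ⁻¹‖ = (‖ρ‖)⁻¹ := by
      rw [show ‖-ρ⁻¹‖ = ‖ρ⁻¹‖ from norm_neg _, norm_inv]
    rw [h2]
    exact inv_anti₀ hrho h1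
  · intro i hi
    rw [← hcoe i hi]
    have := congrArg (fun q : Polynomial ℂ => q.coeff i) hfac
    simp only [Polynomial.coeff_C_mul] at this
    rw [this, hQ, coeff_prod_one_add]

section Main
variable {V : Type} [Fintype V] [DecidableEq V]

noncomputable def Zp (E : Finset (Finset V)) (lam : Finset V → ℂ) (u : V → ℕ → ℂ)
    (S : Finset V) (x : V → ℂ) : ℂ :=
  ∑ F ∈ E.powerset, (∏ e ∈ F, lam e) *
    ((∏ v ∈ S, u v (hypDeg F v) * x v ^ hypDeg F v) * ∏ v ∈ Sᶜ, x v ^ hypDeg F v)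

lemma hypDeg_le {E F : Finset (Finset V)} (hF : F ∈ E.powerset) (v : V) :
    hypDeg F v ≤ hypDeg E v :=
  Finset.card_le_card (Finset.filter_subset_filter _ (Finset.mem_powerset.mp hF))

lemma prod_pow_deg (F : Finset (Finset V)) (x : V → ℂ) :
    ∏ e ∈ F, ∏ v ∈ e, x v = ∏ v : V, x v ^ hypDeg F v := by
  rw [Finset.prod_comm' (s' := fun v => F.filter (fun e => v ∈ e)) (t' := Finset.univ)
    (by intro e v; simp [Finset.mem_filter, and_comm])]
  apply Finset.prod_congr rfl
  intro v _
  rw [Finset.prod_const, hypDeg]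

lemma Zp_empty (E : Finset (Finset V)) (lam : Finset V → ℂ) (u : V → ℕ → ℂ) (x : V → ℂ) :
    Zp E lam u ∅ x = basePoly E lam x := by
  rw [Zp, basePoly]
  have h1 : ∀ e ∈ E, 1 + lam e * ∏ v ∈ e, x v = (lam e * ∏ v ∈ e, x v) + 1 := by
    intro e _; ring
  simp only [Finset.prod_empty, one_mul, Finset.compl_empty]
  rw [Finset.prod_congr rfl h1, Finset.prod_add]
  apply Finset.sum_congr rfl
  intro F hF
  rw [Finset.prod_const_one, mul_one, Finset.prod_mul_distrib, prod_pow_deg]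

lemma Zp_univ (E : Finset (Finset V)) (lam : Finset V → ℂ) (u : V → ℕ → ℂ) (x : V → ℂ) :
    subgraphCountPoly E lam u x = Zp E lam u Finset.univ x := by
  rw [Zp, subgraphCountPoly]
  apply Finset.sum_congr rfl
  intro F _
  rw [Finset.compl_univ, Finset.prod_empty, mul_one, Finset.prod_mul_distrib]
  ring

lemma main_ind (E : Finset (Finset V)) (lam : Finset V → ℂ) (u : V → ℕ → ℂ)
    {κ ρ : ℝ} (hκ : 0 < κ) (hρ : 0 < ρ)
    (hbase : ∀ x : V → ℂ, (∀ v : V, ‖x v‖ < κ) → basePoly E lam x ≠ 0)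
    (T : V → Multiset ℂ)
    (hTcard : ∀ v, Multiset.card (T v) ≤ hypDeg E v)
    (hTabs : ∀ v, ∀ τ ∈ T v, ‖τ‖ ≤ ρ⁻¹)
    (hTrel : ∀ v, ∀ i, i ≤ hypDeg E v →
      (((hypDeg E v).choose i : ℕ) : ℂ) * u v i = u v 0 * (T v).esymm i)
    (hu0 : ∀ v, u v 0 ≠ 0) :
    ∀ S : Finset V, ∀ x : V → ℂ, (∀ v ∈ S, ‖x v‖ < κ * ρ) →
      (∀ v ∉ S, ‖x v‖ < κ) → Zp E lam u S x ≠ 0 := by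
  intro S
  induction S using Finset.induction_on with
  | empty =>
      intro x _ h2
      rw [Zp_empty]
      exact hbase x (fun v => h2 v (Finset.notMem_empty v))
  | @insert w S hwS ih =>
      intro x hx1 hx2
      set d := hypDeg E w with hd
      set cf : Finset (Finset V) → ℂ := fun F => (∏ e ∈ F, lam e) *
        ((∏ v ∈ S, u v (hypDeg F v) * x v ^ hypDeg F v) *
          ∏ v ∈ Sᶜ.erase w, x v ^ hypDeg F v) with hcf
      have hwc : w ∈ Sᶜ := Finset.mem_compl.mpr hwS
      have hupd : ∀ z : ℂ, Zp E lam u S (Function.update x w z)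
          = ∑ F ∈ E.powerset, cf F * z ^ hypDeg F w := by
        intro z
        rw [Zp]
        apply Finset.sum_congr rfl
        intro F _
        rw [hcf]
        have hSprod : (∏ v ∈ S, u v (hypDeg F v) * (Function.update x w z) v ^ hypDeg F v)
            = ∏ v ∈ S, u v (hypDeg F v) * x v ^ hypDeg F v := by
          apply Finset.prod_congr rfl
          intro v hv
          rw [Function.update_of_ne (by rintro rfl; exact hwS hv)]
        have hCprod : (∏ v ∈ Sᶜ, (Function.update x w z) v ^ hypDeg F v)
            = z ^ hypDeg F w * ∏ v ∈ Sᶜ.erase w, x v ^ hypDeg F v := by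
          conv_lhs => rw [← Finset.insert_erase hwc]
          rw [Finset.prod_insert (Finset.notMem_erase w _), Function.update_self]
          congr 1
          apply Finset.prod_congr rfl
          intro v hv
          rw [Function.update_of_ne (Finset.ne_of_mem_erase hv)]
        rw [hSprod, hCprod]
        ring
      have hins : Zp E lam u (insert w S) x
          = ∑ F ∈ E.powerset, cf F * (u w (hypDeg F w) * x w ^ hypDeg F w) := by
        rw [Zp]
        apply Finset.sum_congr rfl
        intro F _
        rw [hcf, Finset.prod_insert hwS, Finset.compl_insert]
        ring
      have hmaps : ∀ F ∈ E.powerset, hypDeg F w ∈ Finset.range (d + 1) := by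
        intro F hF
        rw [Finset.mem_range]
        have := hypDeg_le hF w
        omega
      set A : ℕ → ℂ := fun i => ∑ F ∈ E.powerset.filter (fun F => hypDeg F w = i), cf F
        with hA
      set aa : ℕ → ℂ := fun i => A i / ((d.choose i : ℕ) : ℂ) with haa
      have hchoosene : ∀ i, i ≤ d → ((d.choose i : ℕ) : ℂ) ≠ 0 := fun i hi =>
        Nat.cast_ne_zero.mpr (Nat.choose_pos hi).ne'
      have hfiber : ∀ g : ℕ → ℂ, ∑ i ∈ Finset.range (d + 1), A i * g i
          = ∑ F ∈ E.powerset, cf F * g (hypDeg F w) := by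
        intro g
        rw [← Finset.sum_fiberwise_of_maps_to hmaps (fun F => cf F * g (hypDeg F w))]
        apply Finset.sum_congr rfl
        intro i _
        rw [hA, Finset.sum_mul]
        apply Finset.sum_congr rfl
        intro F hF
        rw [(Finset.mem_filter.mp hF).2]
      have hdiag : ∀ z : ℂ, ‖z‖ < κ →
          ∑ i ∈ Finset.range (d + 1), (d.choose i : ℂ) * aa i * z ^ i ≠ 0 := by
        intro z hz
        have h1 : ∑ i ∈ Finset.range (d + 1), (d.choose i : ℂ) * aa i * z ^ i
            = ∑ i ∈ Finset.range (d + 1), A i * z ^ i := by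
          apply Finset.sum_congr rfl
          intro i hi
          rw [Finset.mem_range] at hi
          have hC := hchoosene i (by omega)
          rw [haa]
          field_simp
        rw [h1, hfiber (fun i => z ^ i), ← hupd z]
        apply ih
        · intro v hv
          rw [Function.update_of_ne (by rintro rfl; exact hwS hv)]
          exact hx1 v (Finset.mem_insert_of_mem hv)
        · intro v hv
          by_cases hvw : v = w
          · subst hvw
            rw [Function.update_self]
            exact hz
          · rw [Function.update_of_ne hvw]
            exact hx2 v (by simp [hvw, hv])
      set Y : Multiset ℂ := ((T w).map fun τ => x w * τ)
        + Multiset.replicate (d - Multiset.card (T w)) 0 with hY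
      have hYcard : Multiset.card Y = d := by
        rw [hY, Multiset.card_add, Multiset.card_map, Multiset.card_replicate]
        have := hTcard w
        omega
      have hYlt : ∀ y ∈ Y, ‖y‖ < κ := by
        intro y hy
        rw [hY, Multiset.mem_add] at hy
        rcases hy with hy | hy
        · obtain ⟨τ, hτ, rfl⟩ := Multiset.mem_map.mp hy
          have h1 : ‖τ‖ ≤ ρ⁻¹ := hTabs w τ hτ
          have h2 : ‖x w‖ < κ * ρ := hx1 w (Finset.mem_insert_self w S)
          rw [norm_mul]
          calc ‖x w‖ * ‖τ‖
              ≤ ‖x w‖ * ρ⁻¹ :=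
                mul_le_mul_of_nonneg_left h1 (norm_nonneg _)
            _ < (κ * ρ) * ρ⁻¹ := mul_lt_mul_of_pos_right h2 (by positivity)
            _ = κ := by field_simp
        · rw [Multiset.eq_of_mem_replicate hy]
          simpa using hκ
      have hesymmY : ∀ i, Y.esymm i = x w ^ i * (T w).esymm i := by
        intro i
        rw [hY, esymm_pad, esymm_smul]
      have hfin : Zp E lam u (insert w S) x
          = u w 0 * ∑ i ∈ Finset.range (d + 1), aa i * Y.esymm i := by
        rw [hins, ← hfiber (fun i => u w i * x w ^ i), Finset.mul_sum]
        apply Finset.sum_congr rfl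
        intro i hi
        rw [Finset.mem_range] at hi
        have hi' : i ≤ d := by omega
        rw [hesymmY i, haa]
        have h4 := hTrel w i hi'
        have hC := hchoosene i hi'
        field_simp
        linear_combination (A i * x w ^ i) * h4
      rw [hfin]
      exact mul_ne_zero (hu0 w) (gws hκ d aa hdiag Y hYcard hYlt)

end Main

end Wag

/-- Wagner's theorem, disk version: if the base polynomial is `κ𝒟`-nonvanishing and every
key polynomial is `ρ𝒟`-nonvanishing (i.e. identically zero or nonzero on the open disk of
radius `ρ`), then the subgraph counting polynomial is `κρ𝒟`-nonvanishing. -/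
theorem wagner_disk
    {V : Type} [Fintype V] [DecidableEq V] (E : Finset (Finset V))
    (lam : Finset V → ℂ) (u : V → ℕ → ℂ) (κ ρ : ℝ) (hκ : 0 < κ) (hρ : 0 < ρ)
    (hbase : ∀ x : V → ℂ, (∀ v : V, ‖x v‖ < κ) → basePoly E lam x ≠ 0)
    (hkey : ∀ v : V, (∀ z : ℂ, keyPoly E u v z = 0) ∨
      (∀ z : ℂ, ‖z‖ < ρ → keyPoly E u v z ≠ 0)) :
    (∀ x : V → ℂ, subgraphCountPoly E lam u x = 0) ∨
      (∀ x : V → ℂ, (∀ v : V, ‖x v‖ < κ * ρ) →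
        subgraphCountPoly E lam u x ≠ 0) := by
    classical
  by_cases hall : ∀ v : V, ∀ z : ℂ, ‖z‖ < ρ → keyPoly E u v z ≠ 0
  · right
    intro x hx
    have hdata : ∀ v : V, u v 0 ≠ 0 ∧ ∃ T : Multiset ℂ,
        Multiset.card T ≤ hypDeg E v ∧ (∀ τ ∈ T, ‖τ‖ ≤ ρ⁻¹) ∧
        ∀ i, i ≤ hypDeg E v →
          (((hypDeg E v).choose i : ℕ) : ℂ) * u v i = u v 0 * T.esymm i := by
      intro v
      exact Wag.key_data hρ (hypDeg E v) (u v) (fun z hz => hall v z hz)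
    choose hu0 T hTcard hTabs hTrel using hdata
    rw [Wag.Zp_univ]
    exact Wag.main_ind E lam u hκ hρ hbase T hTcard hTabs hTrel hu0 Finset.univ x
      (fun v _ => hx v) (fun v hv => absurd (Finset.mem_univ v) hv)
  · left
    push_neg at hall
    obtain ⟨v, z0, hz0, hkz⟩ := hall
    rcases hkey v with hzero | hnon
    · intro x
      have huz : ∀ i, i ≤ hypDeg E v → u v i = 0 := by
        intro i hi
        set q := Wag.polyOf (hypDeg E v)
          (fun i => (((hypDeg E v).choose i : ℕ) : ℂ) * u v i) with hq
        have hq0 : q = 0 := by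
          apply Polynomial.funext
          intro z
          rw [hq, Wag.polyOf_eval, Polynomial.eval_zero]
          exact hzero z
        have hcoef : (((hypDeg E v).choose i : ℕ) : ℂ) * u v i = 0 := by
          have := congrArg (fun p : Polynomial ℂ => p.coeff i) hq0
          simpa [hq, Wag.polyOf_coeff, Nat.lt_succ_of_le hi] using this
        have hC : (((hypDeg E v).choose i : ℕ) : ℂ) ≠ 0 :=
          Nat.cast_ne_zero.mpr (Nat.choose_pos hi).ne'
        exact (mul_eq_zero.mp hcoef).resolve_left hC
      rw [subgraphCountPoly]
      apply Finset.sum_eq_zero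
      intro F hF
      have : u v (hypDeg F v) = 0 := huz _ (Wag.hypDeg_le hF v)
      rw [Finset.prod_eq_zero (Finset.mem_univ v) this]
      ring
    · exact absurd (hnon z0 hz0) (by simpa using hkz)
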